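/- Let G = (U, V, E) be a bipartite graph with |U| = |V| = N containing a perfect matching, and suppose that for every non-perfect matching M ⊆ E there exists an augmenting path of length at most 2l + 1. Then at every iteration i of the fast matching algorithm, every free vertex u ∈ U has at least one neighbor j ∈ n_u with h_j(i) ≤ l. -/

import Mathlib

/-- State of the fast matching algorithm on a bipartite graph with left and right
vertex sets `Fin N`: a partial matching (each left vertex is matched to at most one
right vertex) and a counter `h v` for each right vertex `v`. -/
structure FMState (N : ℕ) where
  matching : Fin N → Option (Fin N)
  h : Fin N → ℕ

/-- Initial state: empty matching, all counters zero. -/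
def FMInit (N : ℕ) : FMState N := ⟨fun _ => none, fun _ => 0⟩

/-- One iteration of the fast matching algorithm for the bipartite graph with edge
relation `E`: a free left vertex `u` is matched to a neighbor `j` whose counter is
minimal among `u`'s neighbors; the previous partner of `j` (if any) becomes free,
and the counter of `j` is incremented. -/
def FMStep {N : ℕ} (E : Fin N → Fin N → Prop) (s s' : FMState N) : Prop :=
  ∃ u j, s.matching u = none ∧ E u j ∧ (∀ k, E u k → s.h j ≤ s.h k) ∧
    s'.h = Function.update s.h j (s.h j + 1) ∧
    s'.matching = fun u' => if u' = u then some j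
      else if s.matching u' = some j then none else s.matching u'

/-- `m` is a (partial) matching of the bipartite graph `E`: matched pairs are edges
and no right vertex is matched to two left vertices. -/
def IsMatching {N : ℕ} (E : Fin N → Fin N → Prop) (m : Fin N → Option (Fin N)) : Prop :=
  (∀ u j, m u = some j → E u j) ∧ ∀ u u' j, m u = some j → m u' = some j → u = u'

/-- An augmenting path of length `2k+1` (edges) with respect to the matching `m`,
given by left vertices `u 0, …, u k` and right vertices `v 0, …, v k`:
it starts at the free vertex `u 0`, the edges `(u i, v i)` are in the graph,
the edges `(u (i+1), v i)` are matched, it ends at the free right vertex `v k`,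
and all vertices along the path are distinct. -/
def AugPath {N : ℕ} (E : Fin N → Fin N → Prop) (m : Fin N → Option (Fin N)) (k : ℕ)
    (u v : ℕ → Fin N) : Prop :=
  m (u 0) = none ∧
  (∀ i ≤ k, E (u i) (v i)) ∧
  (∀ i < k, m (u (i + 1)) = some (v i)) ∧
  (∀ u', m u' ≠ some (v k)) ∧
  (∀ i ≤ k, ∀ j ≤ k, u i = u j → i = j) ∧
  (∀ i ≤ k, ∀ j ≤ k, v i = v j → i = j)

namespace Stmt11Aux

open Classical

variable {N : ℕ} {E : Fin N → Fin N → Prop}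

/-- Augment a matching along an augmenting path. -/
noncomputable def paug (m : Fin N → Option (Fin N)) (k : ℕ) (pu pv : ℕ → Fin N) :
    Fin N → Option (Fin N) := fun x =>
  if h : ∃ i, i ≤ k ∧ pu i = x then some (pv (Classical.choose h)) else m x

variable {m : Fin N → Option (Fin N)} {k : ℕ} {pu pv : ℕ → Fin N}

lemma paug_apply (hP : AugPath E m k pu pv) {i : ℕ} (hi : i ≤ k) :
    paug m k pu pv (pu i) = some (pv i) := by
  have h : ∃ j, j ≤ k ∧ pu j = pu i := ⟨i, hi, rfl⟩
  rw [paug, dif_pos h]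
  obtain ⟨hj1, hj2⟩ := Classical.choose_spec h
  rw [hP.2.2.2.2.1 _ hj1 _ hi hj2]

lemma paug_not_mem {x : Fin N} (h : ¬ ∃ i, i ≤ k ∧ pu i = x) :
    paug m k pu pv x = m x := dif_neg h

lemma paug_isSome (hP : AugPath E m k pu pv) {x : Fin N} (h : (m x).isSome) :
    (paug m k pu pv x).isSome := by
  by_cases hx : ∃ i, i ≤ k ∧ pu i = x
  · rw [paug, dif_pos hx]; rfl
  · rwa [paug_not_mem hx]

lemma paug_matching (hm : IsMatching E m) (hP : AugPath E m k pu pv) :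
    IsMatching E (paug m k pu pv) := by
  obtain ⟨hfree, hedge, hmatch, hvfree, huinj, hvinj⟩ := hP
  constructor
  · intro x j hxj
    by_cases hx : ∃ i, i ≤ k ∧ pu i = x
    · obtain ⟨i, hi, hix⟩ := hx
      rw [← hix, paug_apply ⟨hfree, hedge, hmatch, hvfree, huinj, hvinj⟩ hi] at hxj
      rw [← hix, ← Option.some_inj.mp hxj]
      exact hedge i hi
    · rw [paug_not_mem hx] at hxj
      exact hm.1 _ _ hxj
  · intro x x' j hxj hx'j
    -- helper: if in range, value is pv i
    have key : ∀ y : Fin N, paug m k pu pv y = some j →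
        (∃ i, i ≤ k ∧ pu i = y ∧ pv i = j) ∨ ((¬ ∃ i, i ≤ k ∧ pu i = y) ∧ m y = some j) := by
      intro y hy
      by_cases hx : ∃ i, i ≤ k ∧ pu i = y
      · obtain ⟨i, hi, hix⟩ := hx
        rw [← hix, paug_apply ⟨hfree, hedge, hmatch, hvfree, huinj, hvinj⟩ hi] at hy
        exact Or.inl ⟨i, hi, hix, Option.some_inj.mp hy⟩
      · rw [paug_not_mem hx] at hy
        exact Or.inr ⟨hx, hy⟩
    have hnot : ∀ y : Fin N, (¬ ∃ i, i ≤ k ∧ pu i = y) → m y = some j →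
        (∃ i, i ≤ k ∧ pu i = y ∧ pv i = j) → False := by
      intro y hy hmy ⟨i, hi, hiy, hij⟩; exact hy ⟨i, hi, hiy⟩
    rcases key x hxj with ⟨i, hi, hix, hij⟩ | ⟨hnx, hmx⟩ <;>
      rcases key x' hx'j with ⟨i', hi', hix', hij'⟩ | ⟨hnx', hmx'⟩
    · rw [← hix, ← hix', hvinj i hi i' hi' (hij.trans hij'.symm)]
    · -- x = pu i, pv i = j, m x' = some j, x' not on path
      exfalso
      rcases Nat.lt_or_ge i k with hik | hik
      · have h2 : m (pu (i+1)) = some j := by rw [← hij]; exact hmatch i hik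
        have := hm.2 _ _ _ hmx' h2
        exact hnx' ⟨i+1, hik, this.symm⟩
      · have : i = k := le_antisymm hi hik
        subst this
        rw [← hij] at hmx'
        exact hvfree x' hmx'
    · exfalso
      rcases Nat.lt_or_ge i' k with hik | hik
      · have h2 : m (pu (i'+1)) = some j := by rw [← hij']; exact hmatch i' hik
        have := hm.2 _ _ _ hmx h2
        exact hnx ⟨i'+1, hik, this.symm⟩
      · have : i' = k := le_antisymm hi' hik
        subst this
        rw [← hij'] at hmx
        exact hvfree x hmx
    · exact hm.2 _ _ _ hmx hmx'

/-- Right vertices free after augmentation were free before. -/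
lemma paug_free_right (hP : AugPath E m k pu pv) {j : Fin N}
    (h : ∀ x, paug m k pu pv x ≠ some j) : ∀ x, m x ≠ some j := by
  intro x hmx
  by_cases hx : ∃ i, i ≤ k ∧ pu i = x
  · obtain ⟨i, hi, hix⟩ := hx
    match i, hi, hix with
    | 0, hi, hix =>
      rw [← hix, hP.1] at hmx; exact nomatch hmx
    | (i'+1), hi, hix =>
      have h1 : m (pu (i'+1)) = some (pv i') := hP.2.2.1 i' (by omega)
      rw [← hix] at hmx
      have hji : j = pv i' := by rw [h1] at hmx; exact (Option.some_inj.mp hmx).symm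
      exact h (pu i') (by rw [paug_apply hP (by omega), hji])
  · have heq := paug_not_mem (m := m) (pv := pv) hx
    rw [← heq] at hmx
    exact h x hmx

end Stmt11Aux
namespace Stmt11Aux

variable {N : ℕ} {E : Fin N → Fin N → Prop}

noncomputable def walkX (m m' : Fin N → Option (Fin N)) (z : Fin N) : ℕ → Fin N
  | 0 => z
  | (t+1) =>
    if h : ∃ x, m x = some ((m' (walkX m m' z t)).getD z) then Classical.choose h else z

noncomputable def walkV (m m' : Fin N → Option (Fin N)) (z : Fin N) (t : ℕ) : Fin N :=
  (m' (walkX m m' z t)).getD z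

variable {m m' : Fin N → Option (Fin N)} {z : Fin N}

lemma walk_step {t : ℕ} (h : ∃ x, m x = some (walkV m m' z t)) :
    m (walkX m m' z (t+1)) = some (walkV m m' z t) := by
  have h' : ∃ x, m x = some ((m' (walkX m m' z t)).getD z) := h
  rw [walkX, dif_pos h']
  exact Classical.choose_spec h'

lemma walk (hm : IsMatching E m) (hm' : IsMatching E m')
    (hsome : ∀ x, (m x).isSome → (m' x).isSome) (hz : m z = none) (hz' : (m' z).isSome) :
    ∃ T X V, AugPath E m T X V ∧ X 0 = z ∧ ∀ t ≤ T, m' (X t) = some (V t) := by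
  classical
  set X := walkX m m' z with hXdef
  set V := walkV m m' z with hVdef
  have hXV : ∀ t, (∀ s < t, ∃ x, m x = some (V s)) → m' (X t) = some (V t) := by
    intro t ht
    cases t with
    | zero =>
      obtain ⟨a, ha⟩ := Option.isSome_iff_exists.mp hz'
      show m' z = some ((m' z).getD z)
      rw [ha]
      rfl
    | succ t =>
      have hstep : m (X (t+1)) = some (V t) := walk_step (ht t (Nat.lt_succ_self t))
      have h2 : (m' (X (t+1))).isSome := hsome _ (by rw [hstep]; rfl)
      obtain ⟨a, ha⟩ := Option.isSome_iff_exists.mp h2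
      show m' (X (t+1)) = some ((m' (X (t+1))).getD z)
      rw [ha]
      rfl
  have hVinjle : ∀ t', (∀ s < t', ∃ x, m x = some (V s)) →
      ∀ a, a ≤ t' → ∀ b, b ≤ t' → V a = V b → a ≤ b → a = b := by
    intro t' ht'
    have hX : ∀ a, a ≤ t' → m' (X a) = some (V a) :=
      fun a ha => hXV a (fun s hs => ht' s (lt_of_lt_of_le hs ha))
    have hXdet : ∀ a, a ≤ t' → ∀ b, b ≤ t' → V a = V b → X a = X b := by
      intro a ha b hb hab
      exact hm'.2 _ _ _ (hX a ha) (by rw [hab]; exact hX b hb)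
    intro a
    induction a with
    | zero =>
      intro ha b hb hab _
      cases b with
      | zero => rfl
      | succ b' =>
        exfalso
        have hXeq : X 0 = X (b'+1) := hXdet 0 ha (b'+1) hb hab
        have hstep : m (X (b'+1)) = some (V b') := walk_step (ht' b' (lt_of_lt_of_le (Nat.lt_succ_self b') hb))
        rw [← hXeq] at hstep
        have : X 0 = z := rfl
        rw [this, hz] at hstep
        exact nomatch hstep
    | succ a' ih =>
      intro ha b hb hab hle
      cases b with
      | zero => omega
      | succ b' =>
        have hXeq : X (a'+1) = X (b'+1) := hXdet _ ha _ hb hab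
        have hs1 : m (X (a'+1)) = some (V a') := walk_step (ht' a' (lt_of_lt_of_le (Nat.lt_succ_self a') ha))
        have hs2 : m (X (b'+1)) = some (V b') := walk_step (ht' b' (lt_of_lt_of_le (Nat.lt_succ_self b') hb))
        rw [← hXeq, hs1] at hs2
        have : V a' = V b' := Option.some_inj.mp hs2
        have := ih (le_trans (Nat.le_succ a') ha) b' (le_trans (Nat.le_succ b') hb) this (by omega)
        omega
  have hVinj : ∀ t', (∀ s < t', ∃ x, m x = some (V s)) →
      ∀ a, a ≤ t' → ∀ b, b ≤ t' → V a = V b → a = b := by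
    intro t' ht' a ha b hb hab
    rcases le_total a b with h | h
    · exact hVinjle t' ht' a ha b hb hab h
    · exact (hVinjle t' ht' b hb a ha hab.symm h).symm
  have hfree : ∃ t, ∀ x, m x ≠ some (V t) := by
    by_contra hcon
    push_neg at hcon
    have hinj : Function.Injective (fun a : Fin (N+1) => V a) := by
      intro a b hab
      exact Fin.ext (hVinj (N+1) (fun s _ => hcon s) a (le_of_lt a.isLt) b (le_of_lt b.isLt) hab)
    have hcard := Fintype.card_le_of_injective _ hinj
    simp only [Fintype.card_fin] at hcard
    omega
  set T := Nat.find hfree with hTdef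
  have hT : ∀ x, m x ≠ some (V T) := Nat.find_spec hfree
  have hTmin : ∀ s, s < T → ∃ x, m x = some (V s) := by
    intro s hs
    have := Nat.find_min hfree hs
    push_neg at this
    exact this
  have hXm' : ∀ t, t ≤ T → m' (X t) = some (V t) :=
    fun t ht => hXV t (fun s hs => hTmin s (lt_of_lt_of_le hs ht))
  refine ⟨T, X, V, ⟨rfl.trans hz, ?_, ?_, hT, ?_, hVinj T hTmin⟩, rfl, hXm'⟩
  · exact fun i hi => hm'.1 _ _ (hXm' i hi)
  · exact fun i hi => walk_step (hTmin i hi)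
  · intro a ha b hb hab
    refine hVinj T hTmin a ha b hb ?_
    have h1 := hXm' a ha
    rw [hab, hXm' b hb] at h1
    exact (Option.some_inj.mp h1).symm

end Stmt11Aux
namespace Stmt11Aux

variable {N : ℕ} {E : Fin N → Fin N → Prop}

lemma star (l : ℕ)
    (haug : ∀ m : Fin N → Option (Fin N), IsMatching E m → ¬(∀ u, (m u).isSome) →
      ∃ k ≤ l, ∃ u v, AugPath E m k u v) :
    ∀ n (m : Fin N → Option (Fin N)), (Finset.univ.filter fun x => m x = none).card ≤ n →
      IsMatching E m → ∀ u, m u = none →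
      ∃ k ≤ l, ∃ X V, AugPath E m k X V ∧ X 0 = u := by
  classical
  intro n
  induction n with
  | zero =>
    intro m hcard hm u hu
    exfalso
    have hmem : u ∈ Finset.univ.filter fun x => m x = none := by
      simp [hu]
    have := Finset.card_pos.mpr ⟨u, hmem⟩
    omega
  | succ n ih =>
    intro m hcard hm u hu
    have hnp : ¬(∀ x, (m x).isSome) := by
      intro hall
      have := hall u
      rw [hu] at this
      simp at this
    obtain ⟨k0, hk0, pu0, pv0, hP0⟩ := haug m hm hnp
    have hex : ∃ k, ∃ pu pv, AugPath E m k pu pv := ⟨k0, pu0, pv0, hP0⟩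
    set kP := Nat.find hex with hkPdef
    have hkPl : kP ≤ l := le_trans (Nat.find_min' hex ⟨pu0, pv0, hP0⟩) hk0
    obtain ⟨pu, pv, hP⟩ := Nat.find_spec hex
    by_cases hc : pu 0 = u
    · exact ⟨kP, hkPl, pu, pv, hP, hc⟩
    · set m2 := paug m kP pu pv with hm2def
      have hm2M : IsMatching E m2 := paug_matching hm hP
      have hm2some : ∀ x, (m x).isSome → (m2 x).isSome := fun x => paug_isSome hP
      have hu2 : m2 u = none := by
        rw [hm2def, paug_not_mem]
        · exact hu
        · rintro ⟨i, hi, hiu⟩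
          cases i with
          | zero => exact hc hiu
          | succ i' =>
            have h2 := hP.2.2.1 i' (by omega)
            rw [hiu, hu] at h2
            exact nomatch h2
      have hsub : (Finset.univ.filter fun x => m2 x = none) ⊂
          (Finset.univ.filter fun x => m x = none) := by
        constructor
        · intro x hx
          simp only [Finset.mem_filter, Finset.mem_univ, true_and] at hx ⊢
          by_contra hmx
          have h3 := hm2some x (Option.ne_none_iff_isSome.mp hmx)
          rw [hx] at h3
          simp at h3
        · intro hsup
          have h1 : pu 0 ∈ Finset.univ.filter fun x => m x = none := by
            simp [hP.1]
          have h2 := hsup h1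
          simp only [Finset.mem_filter, Finset.mem_univ, true_and] at h2
          rw [hm2def, paug_apply hP (Nat.zero_le kP)] at h2
          exact nomatch h2
      have hcard2 : (Finset.univ.filter fun x => m2 x = none).card ≤ n := by
        have := Finset.card_lt_card hsub
        omega
      obtain ⟨kQ, hkQl, qu, qv, hQ, hq0⟩ := ih m2 hcard2 hm2M u hu2
      set m' := paug m2 kQ qu qv with hm'def
      have hm'M : IsMatching E m' := paug_matching hm2M hQ
      have hm'some : ∀ x, (m x).isSome → (m' x).isSome :=
        fun x hx => paug_isSome hQ (hm2some x hx)
      have hu' : (m' u).isSome := by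
        rw [hm'def, ← hq0, paug_apply hQ (Nat.zero_le kQ)]
        rfl
      have hu0' : (m' (pu 0)).isSome := by
        refine paug_isSome hQ ?_
        rw [hm2def, paug_apply hP (Nat.zero_le kP)]
        rfl
      obtain ⟨T, X, V, hR, hX0, hXm'⟩ := walk hm hm'M hm'some hu hu'
      obtain ⟨T', Y, W, hR', hY0, hYm'⟩ := walk hm hm'M hm'some hP.1 hu0'
      have hkPT' : kP ≤ T' := Nat.find_min' hex ⟨Y, W, hR'⟩
      have hcross : ∀ a, a ≤ T → ∀ b, b ≤ T' → X a ≠ Y b := by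
        intro a
        induction a with
        | zero =>
          intro _ b hb heq
          cases b with
          | zero =>
            rw [hX0, hY0] at heq
            exact hc heq.symm
          | succ b' =>
            have h2 := hR'.2.2.1 b' (by omega)
            rw [← heq, hX0, hu] at h2
            exact nomatch h2
        | succ a' iha =>
          intro ha b hb heq
          cases b with
          | zero =>
            have h2 := hR.2.2.1 a' (by omega)
            rw [heq, hY0, hP.1] at h2
            exact nomatch h2
          | succ b' =>
            have h1 := hR.2.2.1 a' (by omega)
            have h2 := hR'.2.2.1 b' (by omega)
            rw [heq] at h1
            have hVW : V a' = W b' := Option.some_inj.mp (h1.symm.trans h2)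
            have hXY : X a' = Y b' := by
              refine hm'M.2 _ _ _ (hXm' a' (by omega)) ?_
              rw [hVW]
              exact hYm' b' (by omega)
            exact iha (by omega) b' (by omega) hXY
      set A := (Finset.range (T+1)).image X with hAdef
      set B := (Finset.range (T'+1)).image Y with hBdef
      have hAcard : A.card = T+1 := by
        rw [hAdef, Finset.card_image_of_injOn, Finset.card_range]
        intro a ha b hb hab
        simp only [Finset.coe_range, Set.mem_Iio] at ha hb
        exact hR.2.2.2.2.1 a (by omega) b (by omega) hab
      have hBcard : B.card = T'+1 := by
        rw [hBdef, Finset.card_image_of_injOn, Finset.card_range]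
        intro a ha b hb hab
        simp only [Finset.coe_range, Set.mem_Iio] at ha hb
        exact hR'.2.2.2.2.1 a (by omega) b (by omega) hab
      have hdisj : Disjoint A B := by
        rw [Finset.disjoint_left]
        intro x hx hxB
        rw [hAdef, Finset.mem_image] at hx
        rw [hBdef, Finset.mem_image] at hxB
        obtain ⟨a, ha, rfl⟩ := hx
        obtain ⟨b, hb, hba⟩ := hxB
        rw [Finset.mem_range] at ha hb
        exact hcross a (by omega) b (by omega) hba.symm
      have hSsub : A ∪ B ⊆ (Finset.range (kP+1)).image pu ∪ (Finset.range (kQ+1)).image qu := by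
        intro x hx
        have hx' : m' x ≠ m x := by
          rcases Finset.mem_union.mp hx with hxA | hxB
          · rw [hAdef, Finset.mem_image] at hxA
            obtain ⟨a, ha, rfl⟩ := hxA
            rw [Finset.mem_range] at ha
            rw [hXm' a (by omega)]
            cases a with
            | zero =>
              rw [hR.1]
              simp
            | succ a' =>
              rw [hR.2.2.1 a' (by omega)]
              intro hcon
              have := hR.2.2.2.2.2 (a'+1) (by omega) a' (by omega) (Option.some_inj.mp hcon)
              omega
          · rw [hBdef, Finset.mem_image] at hxB
            obtain ⟨b, hb, rfl⟩ := hxB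
            rw [Finset.mem_range] at hb
            rw [hYm' b (by omega)]
            cases b with
            | zero =>
              rw [hR'.1]
              simp
            | succ b' =>
              rw [hR'.2.2.1 b' (by omega)]
              intro hcon
              have := hR'.2.2.2.2.2 (b'+1) (by omega) b' (by omega) (Option.some_inj.mp hcon)
              omega
        by_contra hnot
        rw [Finset.mem_union] at hnot
        push_neg at hnot
        obtain ⟨hnP, hnQ⟩ := hnot
        rw [Finset.mem_image] at hnP hnQ
        push_neg at hnP hnQ
        apply hx'
        have e1 : ¬ ∃ i, i ≤ kQ ∧ qu i = x := by
          rintro ⟨i, hi, hix⟩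
          exact hnQ i (Finset.mem_range.mpr (by omega)) hix
        have e2 : ¬ ∃ i, i ≤ kP ∧ pu i = x := by
          rintro ⟨i, hi, hix⟩
          exact hnP i (Finset.mem_range.mpr (by omega)) hix
        rw [hm'def, paug_not_mem e1, hm2def, paug_not_mem e2]
      have hcount := Finset.card_le_card hSsub
      have hunion : (A ∪ B).card = A.card + B.card := Finset.card_union_of_disjoint hdisj
      have hScard : ((Finset.range (kP+1)).image pu ∪ (Finset.range (kQ+1)).image qu).card
          ≤ (kP+1) + (kQ+1) := by
        refine le_trans (Finset.card_union_le _ _) ?_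
        have c1 := Finset.card_image_le (s := Finset.range (kP+1)) (f := pu)
        have c2 := Finset.card_image_le (s := Finset.range (kQ+1)) (f := qu)
        rw [Finset.card_range] at c1 c2
        omega
      have hTkQ : T ≤ kQ := by
        rw [hunion, hAcard, hBcard] at hcount
        omega
      exact ⟨T, le_trans hTkQ hkQl, X, V, hR, hX0⟩

end Stmt11Aux
namespace Stmt11Aux

variable {N : ℕ} {E : Fin N → Fin N → Prop}

def Inv (E : Fin N → Fin N → Prop) (s : FMState N) : Prop :=
  IsMatching E s.matching ∧
  (∀ v, (∀ x, s.matching x ≠ some v) → s.h v = 0) ∧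
  (∀ x v w, s.matching x = some v → E x w → s.h v ≤ s.h w + 1)

lemma inv_step {s s' : FMState N} (hs : Inv E s) (hstep : FMStep E s s') : Inv E s' := by
  classical
  obtain ⟨u0, j0, hufree, hEuj, hmin, hh', hm'⟩ := hstep
  obtain ⟨hM, hA, hB⟩ := hs
  have hm'app : ∀ x, s'.matching x =
      if x = u0 then some j0 else if s.matching x = some j0 then none else s.matching x :=
    fun x => by rw [hm']
  have hh'app : ∀ w, s'.h w = if w = j0 then s.h j0 + 1 else s.h w :=
    fun w => by rw [hh']; exact Function.update_apply _ _ _ _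
  refine ⟨⟨?_, ?_⟩, ?_, ?_⟩
  · intro x j hxj
    rw [hm'app x] at hxj
    by_cases hx : x = u0
    · rw [if_pos hx] at hxj
      rw [hx, ← Option.some_inj.mp hxj]
      exact hEuj
    · rw [if_neg hx] at hxj
      by_cases h2 : s.matching x = some j0
      · rw [if_pos h2] at hxj; exact nomatch hxj
      · rw [if_neg h2] at hxj; exact hM.1 _ _ hxj
  · intro x x' j hxj hx'j
    rw [hm'app x] at hxj
    rw [hm'app x'] at hx'j
    by_cases hx : x = u0 <;> by_cases hx' : x' = u0
    · rw [hx, hx']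
    · exfalso
      rw [if_pos hx] at hxj
      rw [if_neg hx'] at hx'j
      have hj : j = j0 := (Option.some_inj.mp hxj).symm
      by_cases h2 : s.matching x' = some j0
      · rw [if_pos h2] at hx'j; exact nomatch hx'j
      · rw [if_neg h2] at hx'j; rw [hj] at hx'j; exact h2 hx'j
    · exfalso
      rw [if_pos hx'] at hx'j
      rw [if_neg hx] at hxj
      have hj : j = j0 := (Option.some_inj.mp hx'j).symm
      by_cases h2 : s.matching x = some j0
      · rw [if_pos h2] at hxj; exact nomatch hxj
      · rw [if_neg h2] at hxj; rw [hj] at hxj; exact h2 hxj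
    · rw [if_neg hx] at hxj
      rw [if_neg hx'] at hx'j
      by_cases h2 : s.matching x = some j0
      · rw [if_pos h2] at hxj; exact nomatch hxj
      · by_cases h3 : s.matching x' = some j0
        · rw [if_pos h3] at hx'j; exact nomatch hx'j
        · rw [if_neg h2] at hxj
          rw [if_neg h3] at hx'j
          exact hM.2 _ _ _ hxj hx'j
  · intro v hv
    have hvj0 : v ≠ j0 := by
      intro h
      apply hv u0
      rw [hm'app u0, if_pos rfl, h]
    have hold : ∀ x, s.matching x ≠ some v := by
      intro x hx
      by_cases hxu : x = u0
      · rw [hxu, hufree] at hx; exact nomatch hx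
      · apply hv x
        rw [hm'app x, if_neg hxu, if_neg]
        · exact hx
        · intro h2
          rw [h2] at hx
          exact hvj0 (Option.some_inj.mp hx).symm
    rw [hh'app v, if_neg hvj0]
    exact hA v hold
  · intro x v w hxv hExw
    rw [hm'app x] at hxv
    rw [hh'app v, hh'app w]
    by_cases hxu : x = u0
    · rw [if_pos hxu] at hxv
      have hvj : v = j0 := Option.some_inj.mp hxv.symm
      rw [if_pos hvj]
      by_cases hw : w = j0
      · rw [if_pos hw]; omega
      · rw [if_neg hw]
        have := hmin w (by rw [← hxu]; exact hExw)
        omega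
    · rw [if_neg hxu] at hxv
      by_cases h2 : s.matching x = some j0
      · rw [if_pos h2] at hxv; exact nomatch hxv
      · rw [if_neg h2] at hxv
        have hvj0 : v ≠ j0 := by
          intro h
          rw [h] at hxv
          exact h2 hxv
        rw [if_neg hvj0]
        have hbase := hB x v w hxv hExw
        by_cases hw : w = j0
        · rw [if_pos hw]
          rw [hw] at hbase
          omega
        · rw [if_neg hw]; exact hbase

lemma run_inv (run : ℕ → FMState N) (h0 : run 0 = FMInit N) :
    ∀ i, (∀ i' < i, FMStep E (run i') (run (i' + 1))) → Inv E (run i) := by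
  intro i
  induction i with
  | zero =>
    intro _
    rw [h0]
    exact ⟨⟨fun u j h => (by cases h), fun u u' j h _ => (by cases h)⟩,
      fun v _ => rfl, fun x v w h _ => (by cases h)⟩
  | succ i ihi =>
    intro hst
    exact inv_step (ihi (fun i' hi' => hst i' (by omega))) (hst i (by omega))

end Stmt11Aux

/-- If `G` contains a perfect matching and every non-perfect matching admits an
augmenting path of length at most `2l + 1`, then at every iteration of the fast
matching algorithm every free left vertex has a neighbor with counter at most `l`. -/
theorem stmt11 {N : ℕ} (E : Fin N → Fin N → Prop) (l : ℕ)
    (hpm : ∃ m, IsMatching E m ∧ ∀ u, (m u).isSome)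
    (haug : ∀ m, IsMatching E m → ¬(∀ u, (m u).isSome) →
      ∃ k ≤ l, ∃ u v, AugPath E m k u v)
    (run : ℕ → FMState N) (h0 : run 0 = FMInit N) (i : ℕ)
    (hstep : ∀ i' < i, FMStep E (run i') (run (i' + 1)))
    (u : Fin N) (hu : (run i).matching u = none) :
    ∃ j, E u j ∧ (run i).h j ≤ l := by
  classical
  obtain ⟨hM, hA, hB⟩ := Stmt11Aux.run_inv (E := E) run h0 i hstep
  have hcard : (Finset.univ.filter fun x => (run i).matching x = none).card ≤ N := by
    simpa using Finset.card_filter_le Finset.univ (fun x => (run i).matching x = none)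
  obtain ⟨k, hkl, X, V, hpath, hX0⟩ :=
    Stmt11Aux.star l haug N (run i).matching hcard hM u hu
  have hchain : ∀ s, s ≤ k → (run i).h (V (k - s)) ≤ s := by
    intro s
    induction s with
    | zero =>
      intro _
      simp only [Nat.sub_zero]
      exact le_of_eq (hA (V k) hpath.2.2.2.1)
    | succ s ihs =>
      intro hs
      have h1 := hpath.2.2.1 (k - (s+1)) (by omega)
      have h2 := hpath.2.1 (k - (s+1) + 1) (by omega)
      have h3 := hB _ _ _ h1 h2
      have h4 : k - (s+1) + 1 = k - s := by omega
      rw [h4] at h3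
      have h5 := ihs (by omega)
      omega
  have h0' := hchain k (le_refl k)
  rw [Nat.sub_self] at h0'
  refine ⟨V 0, ?_, le_trans h0' hkl⟩
  have h6 := hpath.2.1 0 (Nat.zero_le k)
  rwa [hX0] at h6
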